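/- Let r ≥ 2 and 2 ≤ s ≤ r be integers and let δ ≥ 0. If G is a K_{r+1}-free graph on n vertices with k_s(G) ≥ C(r,s)·(n/r)^s − δ·n^s, then e(G) ≥ e(T_r(n)) − C(r,2)·(δ/C(r,s))^{2/s}·n². -/

import Mathlib

open SimpleGraph Matrix
open scoped Classical

/-- `G` contains no copy of `F`, i.e. no subgraph of `G` is isomorphic to `F`:
there is no injective graph homomorphism from `F` into `G`. -/
def IsFFree {α β : Type*} (F : SimpleGraph α) (G : SimpleGraph β) : Prop :=
  ¬ ∃ f : F →g G, Function.Injective f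

/-- The real adjacency matrix of a graph on `Fin n`. -/
noncomputable def adjMat {n : ℕ} (G : SimpleGraph (Fin n)) : Matrix (Fin n) (Fin n) ℝ :=
  Matrix.of fun i j => if G.Adj i j then 1 else 0

/-- The spectral radius of a graph: the largest real eigenvalue of its adjacency matrix. -/
noncomputable def specRad {n : ℕ} (G : SimpleGraph (Fin n)) : ℝ :=
  sSup {μ : ℝ | ∃ x : Fin n → ℝ, x ≠ 0 ∧ adjMat G *ᵥ x = μ • x}

/-- The edit distance between two graphs on the same `n`-element vertex set. -/
noncomputable def editDist {n : ℕ} (G H : SimpleGraph (Fin n)) : ℕ :=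
  sInf {k : ℕ | ∃ H' : SimpleGraph (Fin n), Nonempty (H' ≃g H) ∧
    (symmDiff G.edgeSet H'.edgeSet).ncard = k}

/-- `cliqueCount G s` is the number of copies of `K_s` in `G`. -/
noncomputable def cliqueCount {n : ℕ} (G : SimpleGraph (Fin n)) (s : ℕ) : ℕ :=
  {S : Finset (Fin n) | G.IsNClique s S}.ncard

/-- A graph is color-critical if deleting some edge decreases the chromatic number. -/
def ColorCritical {α : Type*} (F : SimpleGraph α) : Prop :=
  ∃ e ∈ F.edgeSet, (F.deleteEdges {e}).chromaticNumber < F.chromaticNumber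

/-- The `p`-spectral radius of a graph on `Fin n`. -/
noncomputable def pSpecRad {n : ℕ} (p : ℝ) (G : SimpleGraph (Fin n)) : ℝ :=
  sSup {t : ℝ | ∃ x : Fin n → ℝ, (∑ i, |x i| ^ p) = 1 ∧
    t = ∑ i, ∑ j, if G.Adj i j then x i * x j else 0}

/-- The minimum degree of a graph on `Fin n`. -/
noncomputable def minDeg {n : ℕ} (G : SimpleGraph (Fin n)) : ℕ :=
  sInf (Set.range fun v => {u | G.Adj v u}.ncard)

/-- The clique number of a graph. -/
noncomputable def cliqueNum {n : ℕ} (G : SimpleGraph (Fin n)) : ℕ :=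
  sSup {k : ℕ | ∃ S : Finset (Fin n), G.IsNClique k S}

/-- `G` is `K_{r+1}`-saturated: it is `K_{r+1}`-free but adding any missing edge
creates a copy of `K_{r+1}`. -/
def KSaturated (r : ℕ) {V : Type*} (G : SimpleGraph V) : Prop :=
  G.CliqueFree (r + 1) ∧
    ∀ v w : V, v ≠ w → ¬ G.Adj v w →
      ¬ (G ⊔ SimpleGraph.fromEdgeSet {s(v, w)}).CliqueFree (r + 1)

section FRMachinery
open Finset


lemma fr_keyineq (A K y q0 q1 q2 q3 : ℝ) (hA : 1 ≤ A) (hK : 1 ≤ K) (hy : 0 ≤ y)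
    (hlc1 : q0 * q2 ≤ q1 ^ 2) (hlc2 : q1 * q3 ≤ q2 ^ 2) (hlc3 : q0 * q3 ≤ q1 * q2) :
    ((A + 1) * q1 + (K - 1) * y * q0) * ((A - 1) * q3 + (K + 1) * y * q2)
      ≤ (A * q2 + K * y * q1) ^ 2 := by
  nlinarith [sq_nonneg (q2 - y * q1), mul_nonneg (mul_nonneg hy hy) (sub_nonneg.2 hlc1),
    mul_nonneg hy (sub_nonneg.2 hlc3), sub_nonneg.2 hlc2,
    mul_nonneg (mul_nonneg (sub_nonneg.2 hA) (sub_nonneg.2 hK)) hy,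
    mul_nonneg (sub_nonneg.2 hA) (sub_nonneg.2 hA),
    mul_nonneg (sub_nonneg.2 hK) (sub_nonneg.2 hK)]

/-- The ULC induction step, in normalized (q) form. -/
lemma fr_step (m : ℕ) (q : ℕ → ℝ) (y : ℝ) (hy : 0 < y)
    (hpos : ∀ j, j ≤ m → 0 < q j) (hzero : ∀ j, m < j → q j = 0)
    (hlc : ∀ j, q j * q (j + 2) ≤ q (j + 1) ^ 2) :
    (∀ j, j ≤ m + 1 →
        0 < (((m + 1 - j : ℕ) : ℝ) * q j + (j : ℝ) * y * q (j - 1)) / ((m + 1 : ℕ) : ℝ)) ∧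
    (∀ j, m + 1 < j →
        (((m + 1 - j : ℕ) : ℝ) * q j + (j : ℝ) * y * q (j - 1)) / ((m + 1 : ℕ) : ℝ) = 0) ∧
    (∀ j, ((((m + 1 - j : ℕ) : ℝ) * q j + (j : ℝ) * y * q (j - 1)) / ((m + 1 : ℕ) : ℝ)) *
          ((((m + 1 - (j+2) : ℕ) : ℝ) * q (j+2) + ((j+2 : ℕ) : ℝ) * y * q (j + 1)) / ((m + 1 : ℕ) : ℝ))
        ≤ (((((m + 1 - (j+1) : ℕ)) : ℝ) * q (j+1) + ((j+1 : ℕ) : ℝ) * y * q j) / ((m + 1 : ℕ) : ℝ)) ^ 2) := by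
  have hqnn : ∀ j, 0 ≤ q j := by
    intro j
    rcases le_or_gt j m with h | h
    · exact (hpos j h).le
    · exact (hzero j h).ge
  have hm1 : (0:ℝ) < ((m + 1 : ℕ) : ℝ) := by positivity
  refine ⟨?_, ?_, ?_⟩
  · intro j hj
    apply div_pos _ hm1
    rcases eq_or_lt_of_le hj with rfl | hj'
    · have h1 : m + 1 - (m + 1) = 0 := by omega
      have h2 : (m + 1) - 1 = m := by omega
      rw [h1, h2]
      have h3 := hpos m le_rfl
      have h4 : 0 < ((m+1 : ℕ) : ℝ) * y * q m := by positivity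
      simpa using h4
    · have hjm : j ≤ m := by omega
      have h1 : 0 < ((m + 1 - j : ℕ) : ℝ) := by
        have : 0 < m + 1 - j := by omega
        exact_mod_cast this
      have h2 := hpos j hjm
      have h3 : 0 ≤ (j : ℝ) * y * q (j - 1) := by
        have := hqnn (j - 1); positivity
      nlinarith
  · intro j hj
    have h1 : m + 1 - j = 0 := by omega
    have h2 : q j = 0 := hzero j (by omega)
    have h3 : q (j - 1) = 0 := hzero (j - 1) (by omega)
    rw [h1, h2, h3]
    simp
  · intro j
    have hsq : ((m+1:ℕ):ℝ) * ((m+1:ℕ):ℝ) = ((m+1:ℕ):ℝ)^2 := (sq _).symm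
    rw [div_mul_div_comm, div_pow, hsq, div_le_div_iff₀ (by positivity) (by positivity)]
    have main : ((((m + 1 - j : ℕ) : ℝ) * q j + (j : ℝ) * y * q (j - 1))) *
          ((((m + 1 - (j+2) : ℕ) : ℝ) * q (j+2) + ((j+2 : ℕ) : ℝ) * y * q (j + 1)))
        ≤ (((((m + 1 - (j+1) : ℕ)) : ℝ) * q (j+1) + ((j+1 : ℕ) : ℝ) * y * q j)) ^ 2 := by
      rcases le_or_gt m j with hjm | hjm
      · -- top case: everything relevant vanishes
        have h1 : m + 1 - (j + 2) = 0 := by omega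
        have h2 : q (j + 2) = 0 := hzero _ (by omega)
        have h3 : q (j + 1) = 0 := hzero _ (by omega)
        have h4 : m + 1 - (j + 1) = 0 := by omega
        rw [h1, h2, h3, h4]
        simp only [Nat.cast_zero, zero_mul, mul_zero, add_zero, zero_add]
        positivity
      · -- j + 1 ≤ m
        obtain ⟨a, ha, rfl⟩ : ∃ a, 1 ≤ a ∧ m = j + a := ⟨m - j, by omega, by omega⟩
        have e1 : (j + a + 1 - j : ℕ) = a + 1 := by omega
        have e2 : (j + a + 1 - (j+1) : ℕ) = a := by omega
        have e3 : (j + a + 1 - (j+2) : ℕ) = a - 1 := by omega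
        rw [e1, e2, e3]
        have hA : (1:ℝ) ≤ (a : ℝ) := by exact_mod_cast ha
        have e4 : ((a - 1 : ℕ) : ℝ) = (a : ℝ) - 1 := by
          push_cast [Nat.cast_sub ha]; ring
        rw [e4]
        rcases Nat.eq_zero_or_pos j with rfl | hjpos
        · have h := fr_keyineq (a:ℝ) 1 y 0 (q 0) (q 1) (q 2) hA le_rfl hy.le
            (by simpa using sq_nonneg (q 0)) (by simpa using hlc 0)
            (by simpa using mul_nonneg (hqnn 0) (hqnn 1))
          push_cast
          push_cast at h
          linarith [h]
        · obtain ⟨i, rfl⟩ : ∃ i, j = i + 1 := ⟨j - 1, by omega⟩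
          have hq1 : 0 < q (i+1) := hpos _ (by omega)
          have hq2 : 0 < q (i+2) := hpos _ (by omega)
          have hb : 0 < q (i+1) * q (i+2) := mul_pos hq1 hq2
          have hprod : (q i * q (i+2)) * (q (i+1) * q (i+3)) ≤ q (i+1)^2 * q (i+2)^2 :=
            mul_le_mul (hlc i) (hlc (i+1)) (mul_nonneg (hqnn _) (hqnn _)) (sq_nonneg _)
          have hlc3 : q i * q (i+3) ≤ q (i+1) * q (i+2) := by
            apply le_of_mul_le_mul_right _ hb
            nlinarith [hprod]
          have h := fr_keyineq (a:ℝ) ((i:ℝ)+2) y (q i) (q (i+1)) (q (i+2)) (q (i+3)) hA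
            (by linarith [Nat.cast_nonneg (α := ℝ) i]) hy.le (hlc i) (hlc (i+1)) hlc3
          have ecast : ((i+1+2 : ℕ) : ℝ) = (i:ℝ)+3 := by push_cast; ring
          have ecast2 : ((i+1+1 : ℕ) : ℝ) = (i:ℝ)+2 := by push_cast; ring
          have ecast3 : ((i+1 : ℕ) : ℝ) = (i:ℝ)+1 := by push_cast; ring
          rw [ecast, ecast2, ecast3]
          have e5 : ((a + 1 : ℕ) : ℝ) = (a:ℝ)+1 := by push_cast; ring
          rw [e5]
          simp only [show (i+1)+1 = i+2 from rfl, show (i+1)+2 = i+3 from rfl] at *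
          push_cast at h ⊢
          linarith [h]
    calc (((m + 1 - j : ℕ) : ℝ) * q j + (j : ℝ) * y * q (j - 1)) *
          ((((m + 1 - (j+2) : ℕ)) : ℝ) * q (j+2) + ((j+2 : ℕ) : ℝ) * y * q (j + 1)) * ((m+1:ℕ):ℝ)^2
        ≤ (((((m + 1 - (j+1) : ℕ)) : ℝ) * q (j+1) + ((j+1 : ℕ) : ℝ) * y * q j)) ^ 2 * ((m+1:ℕ):ℝ)^2 :=
          mul_le_mul_of_nonneg_right main (by positivity)
      _ = _ := by ring

open Finset

section Esym
variable {ι : Type*} [DecidableEq ι]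

noncomputable def fESym (T : Finset ι) (x : ι → ℝ) (k : ℕ) : ℝ :=
  ∑ A ∈ T.powersetCard k, ∏ i ∈ A, x i

lemma fESym_zero (T : Finset ι) (x : ι → ℝ) : fESym T x 0 = 1 := by
  simp [fESym, Finset.powersetCard_zero]

lemma fESym_of_lt {T : Finset ι} {x : ι → ℝ} {k : ℕ} (h : T.card < k) : fESym T x k = 0 := by
  rw [fESym, Finset.powersetCard_eq_empty.2 h, sum_empty]

lemma fESym_insert {T : Finset ι} {a : ι} (ha : a ∉ T) (x : ι → ℝ) (k : ℕ) :
    fESym (insert a T) x (k+1) = fESym T x (k+1) + x a * fESym T x k := by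
  have hdis : Disjoint (T.powersetCard (k+1)) ((T.powersetCard k).image (insert a)) := by
    rw [disjoint_right]
    intro A hA hA'
    simp only [mem_image] at hA
    obtain ⟨B, hB, rfl⟩ := hA
    rw [mem_powersetCard] at hA'
    exact ha (hA'.1 (mem_insert_self a B))
  have himg : ∀ A ∈ T.powersetCard k, ∀ B ∈ T.powersetCard k, insert a A = insert a B → A = B := by
    intro A hA B hB hAB
    rw [mem_powersetCard] at hA hB
    have h1 : (insert a A).erase a = A := erase_insert (fun h => ha (hA.1 h))
    have h2 : (insert a B).erase a = B := erase_insert (fun h => ha (hB.1 h))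
    rw [← h1, ← h2, hAB]
  have : fESym (insert a T) x (k+1)
      = ∑ A ∈ T.powersetCard (k+1), ∏ i ∈ A, x i
        + ∑ A ∈ (T.powersetCard k).image (insert a), ∏ i ∈ A, x i := by
    rw [fESym, powersetCard_succ_insert ha, sum_union hdis]
  rw [this, sum_image himg]
  congr 1
  rw [fESym, mul_sum]
  exact sum_congr rfl fun A hA => by
    rw [mem_powersetCard] at hA
    rw [prod_insert fun h => ha (hA.1 h)]

lemma fESym_pos {T : Finset ι} {x : ι → ℝ} (hx : ∀ i ∈ T, 0 < x i) {k : ℕ} (h : k ≤ T.card) :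
    0 < fESym T x k := by
  apply Finset.sum_pos
  · intro A hA
    rw [mem_powersetCard] at hA
    exact Finset.prod_pos fun i hi => hx i (hA.1 hi)
  · exact Finset.powersetCard_nonempty.2 h

lemma fESym_nonneg {T : Finset ι} {x : ι → ℝ} (hx : ∀ i ∈ T, 0 ≤ x i) (k : ℕ) :
    0 ≤ fESym T x k :=
  Finset.sum_nonneg fun A hA => Finset.prod_nonneg fun i hi =>
    hx i ((mem_powersetCard.1 hA).1 hi)

noncomputable def fQ (T : Finset ι) (x : ι → ℝ) (k : ℕ) : ℝ :=
  fESym T x k / (T.card.choose k : ℝ)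

end Esym

section Newton
variable {ι : Type*} [DecidableEq ι]

lemma fQ_zero (T : Finset ι) (x : ι → ℝ) : fQ T x 0 = 1 := by
  simp [fQ, fESym_zero]

lemma fr_ratio (E1 E0 y A B c1 c0 C M : ℝ) (hc1 : c1 ≠ 0) (hc0 : c0 ≠ 0) (hC : C ≠ 0)
    (id1 : c1 * M = C * A) (id2 : M * c0 = C * B) :
    (E1 + y * E0) / C * M = A * (E1 / c1) + B * y * (E0 / c0) := by
  have hA : A = c1 * M / C := by rw [eq_div_iff hC]; linear_combination -id1
  have hB : B = M * c0 / C := by rw [eq_div_iff hC]; linear_combination -id2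
  subst hA hB
  field_simp

lemma fr_newton (T : Finset ι) (x : ι → ℝ) (hx : ∀ i ∈ T, 0 < x i) :
    (∀ j, j ≤ T.card → 0 < fQ T x j) ∧ (∀ j, T.card < j → fQ T x j = 0) ∧
    (∀ j, fQ T x j * fQ T x (j+2) ≤ fQ T x (j+1)^2) := by
  induction T using Finset.induction_on with
  | empty =>
    have hq : ∀ j, 0 < j → fQ (∅ : Finset ι) x j = 0 := by
      intro j hj
      rw [fQ, fESym_of_lt (by simpa using hj), zero_div]
    refine ⟨?_, ?_, ?_⟩
    · intro j hj
      simp only [card_empty, Nat.le_zero] at hj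
      subst hj
      rw [fQ_zero]; norm_num
    · intro j hj
      exact hq j (by simpa using hj)
    · intro j
      rw [hq (j+2) (by omega)]
      simp [sq_nonneg]
  | @insert a T ha IH =>
    have hxT : ∀ i ∈ T, 0 < x i := fun i hi => hx i (mem_insert_of_mem hi)
    obtain ⟨hpos, hzero, hlc⟩ := IH hxT
    set m := T.card with hm
    have hcard : (insert a T).card = m + 1 := by rw [hm]; exact card_insert_of_notMem ha
    clear_value m
    have hy : 0 < x a := hx a (mem_insert_self a T)
    have hch : ∀ k : ℕ, k ≤ m → (0:ℝ) < (m.choose k : ℝ) := by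
      intro k hk; exact_mod_cast Nat.choose_pos hk
    have hptw : ∀ j, fQ (insert a T) x j
        = (((m + 1 - j : ℕ) : ℝ) * fQ T x j + (j : ℝ) * x a * fQ T x (j - 1)) / ((m + 1 : ℕ) : ℝ) := by
      intro j
      have hm1 : ((m+1:ℕ):ℝ) ≠ 0 := by positivity
      rcases j with _ | i
      · rw [fQ, hcard, fESym_zero, fQ_zero]
        push_cast
        rw [Nat.choose_zero_right]
        push_cast
        rw [div_one]
        field_simp
        ring
      · rcases le_or_gt (i+1) (m+1) with hj | hj
        · rw [fQ, hcard, fESym_insert ha, eq_div_iff hm1]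
          have hchsucc : ((m+1).choose (i+1) : ℝ) ≠ 0 := by
            have := Nat.choose_pos (by omega : i + 1 ≤ m + 1)
            positivity
          rcases eq_or_lt_of_le hj with heq | hlt
          · -- i + 1 = m + 1, i.e. i = m
            have hi : i = m := by omega
            rw [hi]
            rw [show (m+1).choose (m+1) = 1 from Nat.choose_self _]
            rw [hzero (m+1) (by omega), fESym_of_lt (show T.card < m + 1 by omega)]
            rw [show m + 1 - (m+1) = 0 from by omega, show m + 1 - 1 = m from by omega, fQ,
              ← hm]
            rw [show m.choose m = 1 from Nat.choose_self m]
            push_cast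
            ring
          · -- i + 1 ≤ m
            have him : i + 1 ≤ m := by omega
            have hc1 : ((m.choose (i+1)) : ℝ) ≠ 0 := (hch (i+1) him).ne'
            have hc0 : ((m.choose i) : ℝ) ≠ 0 := (hch i (by omega)).ne'
            have id1 : ((m.choose (i+1)) : ℝ) * ((m+1:ℕ):ℝ) = (((m+1).choose (i+1)) : ℝ) * ((m - i : ℕ) : ℝ) := by
              have h := Nat.choose_mul_succ_eq m (i+1)
              have h3 : m + 1 - (i + 1) = m - i := by omega
              rw [h3] at h
              exact_mod_cast h
            have id2 : ((m+1:ℕ):ℝ) * ((m.choose i) : ℝ) = (((m+1).choose (i+1)) : ℝ) * ((i+1 : ℕ) : ℝ) := by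
              have h := Nat.add_one_mul_choose_eq m i
              exact_mod_cast h
            rw [show m + 1 - (i+1) = m - i from by omega, show i + 1 - 1 = i from rfl, fQ, fQ,
              ← hm]
            exact fr_ratio _ _ _ _ _ _ _ _ _ hc1 hc0 hchsucc id1 id2
        · -- i + 1 > m + 1
          have h2 : fESym (insert a T) x (i+1) = 0 := fESym_of_lt (by omega)
          have h3 : fQ T x (i+1) = 0 := hzero _ (by omega)
          have h4 : fQ T x i = 0 := hzero _ (by omega)
          have h5 : (i+1) - 1 = i := by omega
          rw [fQ, h2, zero_div, h5, h3, h4]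
          simp
    obtain ⟨P1, P2, P3⟩ := fr_step m (fQ T x) (x a) hy hpos hzero hlc
    refine ⟨?_, ?_, ?_⟩
    · intro j hj
      rw [hptw j, hcard] at *
      exact P1 j (by omega)
    · intro j hj
      rw [hptw j]
      exact P2 j (by rw [hcard] at hj; omega)
    · intro j
      rw [hptw j, hptw (j+1), hptw (j+2)]
      exact P3 j

lemma fr_chainA (m : ℕ) (q : ℕ → ℝ) (hq0 : q 0 = 1) (hpos : ∀ j, j ≤ m → 0 < q j)
    (hlc : ∀ j, q j * q (j + 2) ≤ q (j + 1) ^ 2) :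
    ∀ k, 1 ≤ k → k + 1 ≤ m → q (k + 1) ^ k ≤ q k ^ (k + 1) := by
  intro k hk
  induction k, hk using Nat.le_induction with
  | base =>
    intro h1
    have h := hlc 0
    rw [hq0, one_mul] at h
    simpa using h
  | succ k hk IH =>
    intro hk2
    have h1 : 0 < q k := hpos k (by omega)
    have h2 : 0 < q (k+1) := hpos _ (by omega)
    have h3 : 0 < q (k+2) := hpos _ (by omega)
    have IH' : q (k+1) ^ k ≤ q k ^ (k+1) := IH (by omega)
    have step : (q k * q (k+2)) ^ (k+1) ≤ (q (k+1) ^ 2) ^ (k+1) :=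
      pow_le_pow_left₀ (by positivity) (hlc k) _
    have step2 : q (k+2)^(k+1) * q k^(k+1) ≤ q (k+1)^(k+2) * q k^(k+1) := by
      calc q (k+2)^(k+1) * q k^(k+1) = (q k * q (k+2))^(k+1) := by rw [mul_pow]; ring
        _ ≤ (q (k+1)^2)^(k+1) := step
        _ = q (k+1)^(k+2) * q (k+1)^k := by rw [← pow_mul, ← pow_add]; ring_nf
        _ ≤ q (k+1)^(k+2) * q k^(k+1) := mul_le_mul_of_nonneg_left IH' (by positivity)
    exact le_of_mul_le_mul_right step2 (by positivity)

lemma fr_chainB (m : ℕ) (q : ℕ → ℝ) (hq0 : q 0 = 1) (hpos : ∀ j, j ≤ m → 0 < q j)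
    (hlc : ∀ j, q j * q (j + 2) ≤ q (j + 1) ^ 2) :
    ∀ s, 2 ≤ s → s ≤ m → q s ^ 2 ≤ q 2 ^ s := by
  intro s hs
  induction s, hs using Nat.le_induction with
  | base => intro _; exact le_rfl
  | succ s hs IH =>
    intro hs1
    have IH' := IH (by omega)
    have hA := fr_chainA m q hq0 hpos hlc s (by omega) (by omega)
    have h2 : 0 < q 2 := hpos 2 (by omega)
    have hs0 : 0 < q s := hpos s (by omega)
    have hs1' : 0 < q (s+1) := hpos (s+1) (by omega)
    have key : (q (s+1)^2)^s ≤ (q 2^(s+1))^s := by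
      calc (q (s+1)^2)^s = (q (s+1)^s)^2 := by rw [← pow_mul, ← pow_mul]; ring_nf
        _ ≤ (q s^(s+1))^2 := pow_le_pow_left₀ (by positivity) hA _
        _ = (q s^2)^(s+1) := by rw [← pow_mul, ← pow_mul]; ring_nf
        _ ≤ (q 2^s)^(s+1) := pow_le_pow_left₀ (sq_nonneg _) IH' _
        _ = (q 2^(s+1))^s := by rw [← pow_mul, ← pow_mul]; ring_nf
    exact (pow_le_pow_iff_left₀ (by positivity) (by positivity) (by omega)).1 key

lemma fr_maclaurin {ι : Type*} [DecidableEq ι] (T : Finset ι) (x : ι → ℝ)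
    (hx : ∀ i ∈ T, 0 < x i) (s : ℕ) (hs : 2 ≤ s) (hsm : s ≤ T.card) :
    ((T.card.choose 2 : ℕ) : ℝ)^s * fESym T x s^2 ≤ ((T.card.choose s : ℕ) : ℝ)^2 * fESym T x 2^s := by
  obtain ⟨hpos, hzero, hlc⟩ := fr_newton T x hx
  have hq0 : fQ T x 0 = 1 := fQ_zero T x
  have hchain := fr_chainB T.card (fQ T x) hq0 hpos hlc s hs hsm
  have hc2 : (0:ℝ) < ((T.card.choose 2 : ℕ) : ℝ) := by
    exact_mod_cast Nat.choose_pos (le_trans hs hsm)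
  have hcs : (0:ℝ) < ((T.card.choose s : ℕ) : ℝ) := by
    exact_mod_cast Nat.choose_pos hsm
  rw [fQ, fQ, div_pow, div_pow, div_le_div_iff₀ (by positivity) (by positivity)] at hchain
  calc ((T.card.choose 2 : ℕ) : ℝ)^s * fESym T x s^2
      = fESym T x s ^ 2 * ((T.card.choose 2 : ℕ) : ℝ)^s := by ring
    _ ≤ fESym T x 2 ^ s * ((T.card.choose s : ℕ) : ℝ)^2 := hchain
    _ = ((T.card.choose s : ℕ) : ℝ)^2 * fESym T x 2^s := by ring

lemma fr_L (s : ℕ) (r : ℕ) (hs : 2 ≤ s) (hsr : s ≤ r) :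
    ((r:ℝ)+1)^s * ((r:ℝ)+1-(s:ℝ))^2 ≤ ((r:ℝ)+1)^2 * ((r:ℝ)-1)^s := by
  induction s, hs using Nat.le_induction with
  | base =>
    push_cast
    ring_nf
    rfl
  | succ s hs IH =>
    have hsr' : s ≤ r := by omega
    have IH' := IH hsr'
    have hr : (s:ℝ) + 1 ≤ (r:ℝ) := by exact_mod_cast hsr
    have hs2 : (2:ℝ) ≤ (s:ℝ) := by exact_mod_cast hs
    have key : ((r:ℝ)+1) * ((r:ℝ)-(s:ℝ))^2 ≤ ((r:ℝ)+1-(s:ℝ))^2 * ((r:ℝ)-1) := by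
      nlinarith [sq_nonneg ((r:ℝ)-(s:ℝ)), mul_nonneg (sub_nonneg.2 hr) (sub_nonneg.2 hs2)]
    have h1 : (0:ℝ) ≤ (r:ℝ)+1 := by positivity
    have h2 : (0:ℝ) ≤ (r:ℝ)-1 := by nlinarith
    have hcast : ((s+1 : ℕ):ℝ) = (s:ℝ)+1 := by push_cast; ring
    rw [hcast]
    calc ((r:ℝ)+1)^(s+1) * ((r:ℝ)+1-((s:ℝ)+1))^2
        = ((r:ℝ)+1)^s * (((r:ℝ)+1) * ((r:ℝ)-(s:ℝ))^2) := by ring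
      _ ≤ ((r:ℝ)+1)^s * (((r:ℝ)+1-(s:ℝ))^2 * ((r:ℝ)-1)) :=
          mul_le_mul_of_nonneg_left key (by positivity)
      _ = (((r:ℝ)+1)^s * ((r:ℝ)+1-(s:ℝ))^2) * ((r:ℝ)-1) := by ring
      _ ≤ (((r:ℝ)+1)^2 * ((r:ℝ)-1)^s) * ((r:ℝ)-1) := mul_le_mul_of_nonneg_right IH' h2
      _ = ((r:ℝ)+1)^2 * ((r:ℝ)-1)^(s+1) := by ring
  
lemma fr_SL (s r : ℕ) (hs : 2 ≤ s) (hsr : s ≤ r) :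
    ((r.choose s : ℕ):ℝ)^2 * (((r+1).choose 2 : ℕ):ℝ)^s
      ≤ (((r+1).choose s : ℕ):ℝ)^2 * ((r.choose 2 : ℕ):ℝ)^s := by
  have i1 : ((r.choose s : ℕ):ℝ) * ((r:ℝ)+1) = (((r+1).choose s : ℕ):ℝ) * ((r:ℝ)+1-(s:ℝ)) := by
    have h := Nat.choose_mul_succ_eq r s
    have hc : ((r + 1 - s : ℕ) : ℝ) = (r:ℝ)+1-(s:ℝ) := by
      have : (s:ℝ) ≤ (r:ℝ)+1 := by exact_mod_cast le_trans hsr (Nat.le_succ r)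
      rw [Nat.cast_sub (by omega)]
      push_cast
      ring
    calc ((r.choose s : ℕ):ℝ) * ((r:ℝ)+1) = ((r.choose s * (r+1) : ℕ) : ℝ) := by push_cast; ring
      _ = (((r+1).choose s * (r + 1 - s) : ℕ) : ℝ) := by rw [h]
      _ = (((r+1).choose s : ℕ):ℝ) * ((r:ℝ)+1-(s:ℝ)) := by rw [Nat.cast_mul, hc]
  have i2 : ((r.choose 2 : ℕ):ℝ) * ((r:ℝ)+1) = (((r+1).choose 2 : ℕ):ℝ) * ((r:ℝ)-1) := by
    have h := Nat.choose_mul_succ_eq r 2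
    have hc : ((r + 1 - 2 : ℕ) : ℝ) = (r:ℝ)-1 := by
      rw [show r + 1 - 2 = r - 1 from by omega, Nat.cast_sub (by omega)]
      push_cast
      ring
    calc ((r.choose 2 : ℕ):ℝ) * ((r:ℝ)+1) = ((r.choose 2 * (r+1) : ℕ) : ℝ) := by push_cast; ring
      _ = (((r+1).choose 2 * (r + 1 - 2) : ℕ) : ℝ) := by rw [h]
      _ = (((r+1).choose 2 : ℕ):ℝ) * ((r:ℝ)-1) := by rw [Nat.cast_mul, hc]
  have hL := fr_L s r hs hsr
  have hpow : (0:ℝ) < ((r:ℝ)+1)^(s+2) := by positivity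
  apply le_of_mul_le_mul_right _ hpow
  have e1 : ((r.choose s : ℕ):ℝ)^2 * (((r+1).choose 2 : ℕ):ℝ)^s * ((r:ℝ)+1)^(s+2)
      = ((((r+1).choose s : ℕ):ℝ)^2 * (((r+1).choose 2 : ℕ):ℝ)^s) * (((r:ℝ)+1)^s * ((r:ℝ)+1-(s:ℝ))^2) := by
    calc ((r.choose s : ℕ):ℝ)^2 * (((r+1).choose 2 : ℕ):ℝ)^s * ((r:ℝ)+1)^(s+2)
        = (((r.choose s : ℕ):ℝ) * ((r:ℝ)+1))^2 * (((r+1).choose 2 : ℕ):ℝ)^s * ((r:ℝ)+1)^s := by ring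
      _ = ((((r+1).choose s : ℕ):ℝ) * ((r:ℝ)+1-(s:ℝ)))^2 * (((r+1).choose 2 : ℕ):ℝ)^s * ((r:ℝ)+1)^s := by rw [i1]
      _ = _ := by ring
  have e2 : (((r+1).choose s : ℕ):ℝ)^2 * ((r.choose 2 : ℕ):ℝ)^s * ((r:ℝ)+1)^(s+2)
      = ((((r+1).choose s : ℕ):ℝ)^2 * (((r+1).choose 2 : ℕ):ℝ)^s) * (((r:ℝ)+1)^2 * ((r:ℝ)-1)^s) := by
    calc (((r+1).choose s : ℕ):ℝ)^2 * ((r.choose 2 : ℕ):ℝ)^s * ((r:ℝ)+1)^(s+2)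
        = (((r+1).choose s : ℕ):ℝ)^2 * (((r.choose 2 : ℕ):ℝ) * ((r:ℝ)+1))^s * ((r:ℝ)+1)^2 := by
          rw [mul_pow]; ring
      _ = (((r+1).choose s : ℕ):ℝ)^2 * ((((r+1).choose 2 : ℕ):ℝ) * ((r:ℝ)-1))^s * ((r:ℝ)+1)^2 := by rw [i2]
      _ = _ := by rw [mul_pow]; ring
  rw [e1, e2]
  exact mul_le_mul_of_nonneg_left hL (by positivity)

lemma fr_mono (s m r : ℕ) (hs : 2 ≤ s) (hsm : s ≤ m) (hmr : m ≤ r) :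
    ((r.choose 2 : ℕ):ℝ)^s * ((m.choose s : ℕ):ℝ)^2 ≤ ((r.choose s : ℕ):ℝ)^2 * ((m.choose 2 : ℕ):ℝ)^s := by
  induction r, hmr using Nat.le_induction with
  | base => ring_nf; rfl
  | succ r hmr IH =>
    have hsr : s ≤ r := le_trans hsm hmr
    have hSL := fr_SL s r hs hsr
    have hc2 : (0:ℝ) < ((r.choose 2 : ℕ):ℝ)^s := by
      have : 0 < r.choose 2 := Nat.choose_pos (by omega)
      positivity
    apply le_of_mul_le_mul_right _ hc2
    calc (((r+1).choose 2 : ℕ):ℝ)^s * ((m.choose s : ℕ):ℝ)^2 * ((r.choose 2 : ℕ):ℝ)^s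
        = (((r.choose 2 : ℕ):ℝ)^s * ((m.choose s : ℕ):ℝ)^2) * (((r+1).choose 2 : ℕ):ℝ)^s := by ring
      _ ≤ (((r.choose s : ℕ):ℝ)^2 * ((m.choose 2 : ℕ):ℝ)^s) * (((r+1).choose 2 : ℕ):ℝ)^s :=
          mul_le_mul_of_nonneg_right IH (by positivity)
      _ = (((r.choose s : ℕ):ℝ)^2 * (((r+1).choose 2 : ℕ):ℝ)^s) * ((m.choose 2 : ℕ):ℝ)^s := by ring
      _ ≤ ((((r+1).choose s : ℕ):ℝ)^2 * ((r.choose 2 : ℕ):ℝ)^s) * ((m.choose 2 : ℕ):ℝ)^s :=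
          mul_le_mul_of_nonneg_right hSL (by positivity)
      _ = (((r+1).choose s : ℕ):ℝ)^2 * ((m.choose 2 : ℕ):ℝ)^s * ((r.choose 2 : ℕ):ℝ)^s := by ring

end Newton

section Graph
open SimpleGraph
open scoped Classical

variable {n : ℕ}

noncomputable def gP (G : SimpleGraph (Fin n)) (j : ℕ) (x : Fin n → ℝ) : ℝ :=
  ∑ S ∈ G.cliqueFinset j, ∏ i ∈ S, x i

noncomputable def gB (G : SimpleGraph (Fin n)) (j : ℕ) (u : Fin n) (x : Fin n → ℝ) : ℝ :=
  ∑ S ∈ (G.cliqueFinset j).filter (fun S => u ∈ S), ∏ i ∈ S.erase u, x i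

lemma gP_nonneg (G : SimpleGraph (Fin n)) (j : ℕ) {x : Fin n → ℝ} (hx : ∀ i, 0 ≤ x i) :
    0 ≤ gP G j x :=
  Finset.sum_nonneg fun S _ => Finset.prod_nonneg fun i _ => hx i

lemma gB_nonneg (G : SimpleGraph (Fin n)) (j : ℕ) (u : Fin n) {x : Fin n → ℝ}
    (hx : ∀ i, 0 ≤ x i) : 0 ≤ gB G j u x :=
  Finset.sum_nonneg fun S _ => Finset.prod_nonneg fun i _ => hx i

lemma prod_update_of_not_mem' {S : Finset (Fin n)} {u : Fin n} (h : u ∉ S) (x : Fin n → ℝ)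
    (a : ℝ) : ∏ i ∈ S, Function.update x u a i = ∏ i ∈ S, x i :=
  Finset.prod_congr rfl fun i hi => Function.update_of_ne (fun he : i = u => h (he ▸ hi)) a x

lemma gP_split (G : SimpleGraph (Fin n)) (j : ℕ) (u : Fin n) (x : Fin n → ℝ) :
    gP G j x = (∑ S ∈ (G.cliqueFinset j).filter (fun S => u ∉ S), ∏ i ∈ S, x i)
      + x u * gB G j u x := by
  have h1 : ∑ S ∈ (G.cliqueFinset j).filter (fun S => u ∈ S), ∏ i ∈ S, x i
      = x u * gB G j u x := by
    rw [gB, Finset.mul_sum]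
    refine Finset.sum_congr rfl fun S hS => ?_
    rw [Finset.mem_filter] at hS
    exact (Finset.mul_prod_erase S x hS.2).symm
  rw [gP, ← Finset.sum_filter_add_sum_filter_not (G.cliqueFinset j) (fun S => u ∈ S), h1,
    add_comm]

lemma gB_update_self (G : SimpleGraph (Fin n)) (j : ℕ) (u : Fin n) (x : Fin n → ℝ) (a : ℝ) :
    gB G j u (Function.update x u a) = gB G j u x := by
  refine Finset.sum_congr rfl fun S hS => ?_
  exact Finset.prod_congr rfl fun i hi =>
    Function.update_of_ne (Finset.ne_of_mem_erase hi) a x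

lemma gP_update (G : SimpleGraph (Fin n)) (j : ℕ) (u : Fin n) (x : Fin n → ℝ) (a : ℝ) :
    gP G j (Function.update x u a) = gP G j x + (a - x u) * gB G j u x := by
  rw [gP_split G j u (Function.update x u a), gP_split G j u x]
  have h1 : ∑ S ∈ (G.cliqueFinset j).filter (fun S => u ∉ S), ∏ i ∈ S, Function.update x u a i
      = ∑ S ∈ (G.cliqueFinset j).filter (fun S => u ∉ S), ∏ i ∈ S, x i := by
    refine Finset.sum_congr rfl fun S hS => ?_
    rw [Finset.mem_filter] at hS
    exact prod_update_of_not_mem' hS.2 x a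
  rw [h1, gB_update_self, Function.update_self]
  ring

lemma gB_update_other (G : SimpleGraph (Fin n)) (j : ℕ) {u v : Fin n} (hne : u ≠ v)
    (hnadj : ¬ G.Adj u v) (x : Fin n → ℝ) (a : ℝ) :
    gB G j v (Function.update x u a) = gB G j v x := by
  refine Finset.sum_congr rfl fun S hS => ?_
  rw [Finset.mem_filter, SimpleGraph.mem_cliqueFinset_iff] at hS
  have hu : u ∉ S := by
    intro huS
    exact hnadj (hS.1.isClique huS hS.2 hne)
  refine Finset.prod_congr rfl fun i hi => ?_
  exact Function.update_of_ne (fun he : i = u => hu (he ▸ Finset.mem_of_mem_erase hi)) a x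

lemma gP_move (G : SimpleGraph (Fin n)) (j : ℕ) {u v : Fin n} (hne : u ≠ v)
    (hnadj : ¬ G.Adj u v) (x : Fin n → ℝ) (a b : ℝ) :
    gP G j (Function.update (Function.update x u a) v b)
      = gP G j x + (a - x u) * gB G j u x + (b - x v) * gB G j v x := by
  rw [gP_update G j v (Function.update x u a) b, gP_update G j u x a,
    gB_update_other G j hne hnadj x a, Function.update_of_ne (Ne.symm hne) a x]

lemma gB_one (G : SimpleGraph (Fin n)) (u : Fin n) (x : Fin n → ℝ) : gB G 1 u x = 1 := by
  have hfilter : (G.cliqueFinset 1).filter (fun S => u ∈ S) = {{u}} := by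
    ext S
    simp only [Finset.mem_filter, SimpleGraph.mem_cliqueFinset_iff, Finset.mem_singleton]
    constructor
    · rintro ⟨hcl, hu⟩
      obtain ⟨w, rfl⟩ := Finset.card_eq_one.1 hcl.2
      rw [Finset.mem_singleton] at hu
      rw [hu]
    · rintro rfl
      refine ⟨⟨?_, Finset.card_singleton u⟩, Finset.mem_singleton_self u⟩
      simp [SimpleGraph.IsClique]
  rw [gB, hfilter, Finset.sum_singleton, Finset.erase_singleton, Finset.prod_empty]

end Graph

section GraphMain
open SimpleGraph Finset
open scoped Classical

variable {n : ℕ}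

lemma fr_isNClique_pair (G : SimpleGraph (Fin n)) {u w : Fin n} (h : G.Adj u w) :
    G.IsNClique 2 {u, w} := by
  constructor
  · intro a ha b hb hab
    simp only [Finset.coe_insert, Finset.coe_singleton, Set.mem_insert_iff,
      Set.mem_singleton_iff] at ha hb
    rcases ha with rfl | rfl <;> rcases hb with rfl | rfl
    · exact absurd rfl hab
    · exact h
    · exact h.symm
    · exact absurd rfl hab
  · exact Finset.card_pair h.ne

lemma gB_s_zero (G : SimpleGraph (Fin n)) {u : Fin n} {x : Fin n → ℝ} {s : ℕ} (hs : 2 ≤ s)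
    (hx : ∀ i, 0 ≤ x i) (hE : gB G 2 u x = 0) : gB G s u x = 0 := by
  have hterm : ∀ S ∈ (G.cliqueFinset 2).filter (fun S => u ∈ S), ∏ i ∈ S.erase u, x i = 0 := by
    rw [← Finset.sum_eq_zero_iff_of_nonneg
      (fun S _ => Finset.prod_nonneg fun i _ => hx i)]
    exact hE
  have hw : ∀ w, G.Adj u w → x w = 0 := by
    intro w hadj
    have hmem : ({u, w} : Finset (Fin n)) ∈ (G.cliqueFinset 2).filter (fun S => u ∈ S) := by
      rw [Finset.mem_filter, SimpleGraph.mem_cliqueFinset_iff]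
      exact ⟨fr_isNClique_pair G hadj, Finset.mem_insert_self _ _⟩
    have := hterm _ hmem
    rwa [Finset.erase_insert (by simpa using hadj.ne), Finset.prod_singleton] at this
  apply Finset.sum_eq_zero
  intro S hS
  rw [Finset.mem_filter, SimpleGraph.mem_cliqueFinset_iff] at hS
  obtain ⟨hcl, huS⟩ := hS
  have hcard : (S.erase u).card = s - 1 := by rw [Finset.card_erase_of_mem huS, hcl.2]
  have hne : (S.erase u).Nonempty := by rw [← Finset.card_pos, hcard]; omega
  obtain ⟨w, hw'⟩ := hne
  have hwu : w ≠ u := Finset.ne_of_mem_erase hw'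
  have hadj : G.Adj u w := hcl.1 huS (Finset.mem_of_mem_erase hw') (Ne.symm hwu)
  exact Finset.prod_eq_zero hw' (hw w hadj)

lemma gP_eq_fESym (G : SimpleGraph (Fin n)) (x : Fin n → ℝ) (j : ℕ) (hj : 1 ≤ j)
    (hclique : G.IsClique ((Finset.univ.filter fun i => x i ≠ 0) : Finset (Fin n))) :
    gP G j x = fESym (Finset.univ.filter fun i => x i ≠ 0) x j := by
  rw [gP, fESym]
  refine (Finset.sum_subset ?_ ?_).symm
  · intro A hA
    rw [Finset.mem_powersetCard] at hA
    rw [SimpleGraph.mem_cliqueFinset_iff]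
    exact ⟨hclique.subset (by exact_mod_cast Finset.coe_subset.2 hA.1), hA.2⟩
  · intro S hS hS'
    rw [SimpleGraph.mem_cliqueFinset_iff] at hS
    have : ¬ S ⊆ Finset.univ.filter fun i => x i ≠ 0 := by
      intro hsub
      exact hS' (Finset.mem_powersetCard.2 ⟨hsub, hS.2⟩)
    obtain ⟨i, hiS, hiT⟩ := Finset.not_subset.1 this
    have : x i = 0 := by
      by_contra hxi
      exact hiT (Finset.mem_filter.2 ⟨Finset.mem_univ i, hxi⟩)
    exact Finset.prod_eq_zero hiS this

lemma fr_graph_clique (G : SimpleGraph (Fin n)) (r s : ℕ) (hG : G.CliqueFree (r + 1))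
    (hs2 : 2 ≤ s) (hsr : s ≤ r) (x : Fin n → ℝ) (hx : ∀ i, 0 ≤ x i)
    (hclique : G.IsClique ((Finset.univ.filter fun i => x i ≠ 0) : Finset (Fin n))) :
    ((r.choose 2 : ℕ):ℝ)^s * gP G s x^2 ≤ ((r.choose s : ℕ):ℝ)^2 * gP G 2 x^s := by
  set T := Finset.univ.filter fun i => x i ≠ 0 with hT
  have hxT : ∀ i ∈ T, 0 < x i := by
    intro i hi
    rw [hT, Finset.mem_filter] at hi
    exact lt_of_le_of_ne (hx i) (Ne.symm hi.2)
  have hTr : T.card ≤ r := by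
    by_contra hgt
    push_neg at hgt
    obtain ⟨U, hUT, hU⟩ := Finset.exists_subset_card_eq (by omega : r + 1 ≤ T.card)
    exact hG U ⟨hclique.subset (by exact_mod_cast Finset.coe_subset.2 hUT), hU⟩
  have h2 : gP G 2 x = fESym T x 2 := gP_eq_fESym G x 2 (by omega) hclique
  have hsx : gP G s x = fESym T x s := gP_eq_fESym G x s (by omega) hclique
  have h2nn : 0 ≤ gP G 2 x := gP_nonneg G 2 hx
  rcases le_or_gt s T.card with hsm | hms
  · have hmac := fr_maclaurin T x hxT s hs2 hsm
    have hmono := fr_mono s T.card r hs2 hsm hTr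
    have hm2pos : (0:ℝ) < ((T.card.choose 2 : ℕ):ℝ)^s := by
      have : 0 < T.card.choose 2 := Nat.choose_pos (by omega)
      positivity
    rw [h2, hsx]
    apply le_of_mul_le_mul_right _ hm2pos
    have hE2nn : (0:ℝ) ≤ fESym T x 2 ^ s := by rw [← h2]; positivity
    calc ((r.choose 2 : ℕ):ℝ)^s * fESym T x s^2 * ((T.card.choose 2 : ℕ):ℝ)^s
        = (((T.card.choose 2 : ℕ):ℝ)^s * fESym T x s^2) * ((r.choose 2 : ℕ):ℝ)^s := by ring
      _ ≤ (((T.card.choose s : ℕ):ℝ)^2 * fESym T x 2^s) * ((r.choose 2 : ℕ):ℝ)^s := by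
          apply mul_le_mul_of_nonneg_right hmac (by positivity)
      _ = (((r.choose 2 : ℕ):ℝ)^s * ((T.card.choose s : ℕ):ℝ)^2) * fESym T x 2^s := by ring
      _ ≤ (((r.choose s : ℕ):ℝ)^2 * ((T.card.choose 2 : ℕ):ℝ)^s) * fESym T x 2^s :=
          mul_le_mul_of_nonneg_right hmono hE2nn
      _ = ((r.choose s : ℕ):ℝ)^2 * fESym T x 2^s * ((T.card.choose 2 : ℕ):ℝ)^s := by ring
  · rw [hsx, fESym_of_lt hms]
    have : (0:ℝ) ≤ ((r.choose s : ℕ):ℝ)^2 * gP G 2 x^s := by positivity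
    simpa using this

theorem fr_graph (G : SimpleGraph (Fin n)) (r s : ℕ) (hG : G.CliqueFree (r + 1))
    (hs2 : 2 ≤ s) (hsr : s ≤ r) :
    ∀ (k : ℕ) (x : Fin n → ℝ), (∀ i, 0 ≤ x i) →
      (Finset.univ.filter fun i => x i ≠ 0).card ≤ k →
      ((r.choose 2 : ℕ):ℝ)^s * gP G s x^2 ≤ ((r.choose s : ℕ):ℝ)^2 * gP G 2 x^s := by
  intro k
  induction k with
  | zero =>
    intro x hx hk
    have hTe : (Finset.univ.filter fun i => x i ≠ 0) = ∅ :=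
      Finset.card_eq_zero.1 (Nat.le_zero.1 hk)
    apply fr_graph_clique G r s hG hs2 hsr x hx
    rw [hTe]
    simp [SimpleGraph.IsClique]
  | succ k IH =>
    intro x hx hk1
    by_cases hcl : G.IsClique ((Finset.univ.filter fun i => x i ≠ 0) : Finset (Fin n))
    · exact fr_graph_clique G r s hG hs2 hsr x hx hcl
    · set T := Finset.univ.filter fun i => x i ≠ 0 with hT
      have hfin : ∀ x' : Fin n → ℝ, (∀ i, 0 ≤ x' i) →
          (Finset.univ.filter fun i => x' i ≠ 0).card ≤ k →
          gP G 2 x' = gP G 2 x → gP G s x ≤ gP G s x' →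
          ((r.choose 2 : ℕ):ℝ)^s * gP G s x^2 ≤ ((r.choose s : ℕ):ℝ)^2 * gP G 2 x^s := by
        intro x' hx' hcard h2 hs
        have h0 : 0 ≤ gP G s x := gP_nonneg G s hx
        calc ((r.choose 2 : ℕ):ℝ)^s * gP G s x^2
            ≤ ((r.choose 2 : ℕ):ℝ)^s * gP G s x'^2 := by
              apply mul_le_mul_of_nonneg_left (pow_le_pow_left₀ h0 hs 2) (by positivity)
          _ ≤ ((r.choose s : ℕ):ℝ)^2 * gP G 2 x'^s := IH x' hx' hcard
          _ = ((r.choose s : ℕ):ℝ)^2 * gP G 2 x^s := by rw [h2]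
      rw [SimpleGraph.isClique_iff] at hcl
      simp only [Set.Pairwise, not_forall] at hcl
      obtain ⟨u, hu, v, hv, hne, hnadj⟩ := hcl
      have huT : u ∈ T := Finset.mem_coe.1 hu
      have hvT : v ∈ T := Finset.mem_coe.1 hv
      have hxu : 0 < x u := lt_of_le_of_ne (hx u) (Ne.symm (Finset.mem_filter.1 huT).2)
      have hxv : 0 < x v := lt_of_le_of_ne (hx v) (Ne.symm (Finset.mem_filter.1 hvT).2)
      have hcardT : 1 ≤ T.card := Finset.card_pos.2 ⟨u, huT⟩
      -- card of supp after erasing one element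
      have herase : ∀ w ∈ T, (T.erase w).card ≤ k := by
        intro w hw
        rw [Finset.card_erase_of_mem hw]
        omega
      set E := gB G 2 u x with hE
      set F := gB G 2 v x with hF
      have hEnn : 0 ≤ E := gB_nonneg G 2 u hx
      have hFnn : 0 ≤ F := gB_nonneg G 2 v hx
      by_cases hE0 : E = 0
      · -- zero out u
        set x' := Function.update x u 0 with hx'
        have hnn : ∀ i, 0 ≤ x' i := by
          intro i
          rcases eq_or_ne i u with rfl | hiu
          · rw [hx', Function.update_self]
          · rw [hx', Function.update_of_ne hiu]
            exact hx i
        have hsupp : (Finset.univ.filter fun i => x' i ≠ 0) ⊆ T.erase u := by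
          intro i hi
          rw [Finset.mem_filter] at hi
          rcases eq_or_ne i u with rfl | hiu
          · rw [hx', Function.update_self] at hi
            exact absurd rfl hi.2
          · rw [hx', Function.update_of_ne hiu] at hi
            exact Finset.mem_erase.2 ⟨hiu, Finset.mem_filter.2 ⟨Finset.mem_univ i, hi.2⟩⟩
        apply hfin x' hnn (le_trans (Finset.card_le_card hsupp) (herase u huT))
        · rw [hx', gP_update, ← hE, hE0]
          ring
        · rw [hx', gP_update, gB_s_zero G hs2 hx hE0]
          simp [le_refl]
      · by_cases hF0 : F = 0
        · set x' := Function.update x v 0 with hx'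
          have hnn : ∀ i, 0 ≤ x' i := by
            intro i
            rcases eq_or_ne i v with rfl | hiv
            · rw [hx', Function.update_self]
            · rw [hx', Function.update_of_ne hiv]
              exact hx i
          have hsupp : (Finset.univ.filter fun i => x' i ≠ 0) ⊆ T.erase v := by
            intro i hi
            rw [Finset.mem_filter] at hi
            rcases eq_or_ne i v with rfl | hiv
            · rw [hx', Function.update_self] at hi
              exact absurd rfl hi.2
            · rw [hx', Function.update_of_ne hiv] at hi
              exact Finset.mem_erase.2 ⟨hiv, Finset.mem_filter.2 ⟨Finset.mem_univ i, hi.2⟩⟩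
          apply hfin x' hnn (le_trans (Finset.card_le_card hsupp) (herase v hvT))
          · rw [hx', gP_update, ← hF, hF0]
            ring
          · rw [hx', gP_update, gB_s_zero G hs2 hx hF0]
            simp [le_refl]
        · have hEpos : 0 < E := lt_of_le_of_ne hEnn (Ne.symm hE0)
          have hFpos : 0 < F := lt_of_le_of_ne hFnn (Ne.symm hF0)
          set Bu := gB G s u x with hBu
          set Bv := gB G s v x with hBv
          have hBunn : 0 ≤ Bu := gB_nonneg G s u hx
          have hBvnn : 0 ≤ Bv := gB_nonneg G s v hx
          by_cases hg : 0 ≤ F * Bu - E * Bv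
          · -- move weight from v to u
            set t := x v / E with ht
            have htpos : 0 < t := div_pos hxv hEpos
            set x' := Function.update (Function.update x u (x u + t * F)) v 0 with hx'
            have hmove2 := gP_move G 2 hne hnadj x (x u + t * F) 0
            have hmoves := gP_move G s hne hnadj x (x u + t * F) 0
            have hnn : ∀ i, 0 ≤ x' i := by
              intro i
              rcases eq_or_ne i v with rfl | hiv
              · rw [hx', Function.update_self]
              · rw [hx', Function.update_of_ne hiv]
                rcases eq_or_ne i u with rfl | hiu
                · rw [Function.update_self]
                  positivity
                · rw [Function.update_of_ne hiu]
                  exact hx i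
            have hsupp : (Finset.univ.filter fun i => x' i ≠ 0) ⊆ T.erase v := by
              intro i hi
              rw [Finset.mem_filter] at hi
              rcases eq_or_ne i v with rfl | hiv
              · rw [hx', Function.update_self] at hi
                exact absurd rfl hi.2
              · rcases eq_or_ne i u with rfl | hiu
                · exact Finset.mem_erase.2 ⟨hne, huT⟩
                · rw [hx', Function.update_of_ne hiv, Function.update_of_ne hiu] at hi
                  exact Finset.mem_erase.2 ⟨hiv, Finset.mem_filter.2 ⟨Finset.mem_univ i, hi.2⟩⟩
            apply hfin x' hnn (le_trans (Finset.card_le_card hsupp) (herase v hvT))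
            · rw [hx', hmove2, ← hE, ← hF]
              have : (x u + t * F - x u) * E + (0 - x v) * F = 0 := by
                rw [ht]
                field_simp
                ring
              linarith [this]
            · rw [hx', hmoves, ← hBu, ← hBv]
              have : 0 ≤ (x u + t * F - x u) * Bu + (0 - x v) * Bv := by
                have h1 : (x u + t * F - x u) * Bu + (0 - x v) * Bv
                    = (x v / E) * (F * Bu - E * Bv) := by
                  rw [ht]
                  field_simp
                  ring
                rw [h1]
                exact mul_nonneg (div_nonneg hxv.le hEpos.le) hg
              linarith [this]
          · -- move weight from u to v
            push_neg at hg
            set t := x u / F with ht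
            have htpos : 0 < t := div_pos hxu hFpos
            set x' := Function.update (Function.update x u 0) v (x v + t * E) with hx'
            have hmove2 := gP_move G 2 hne hnadj x 0 (x v + t * E)
            have hmoves := gP_move G s hne hnadj x 0 (x v + t * E)
            have hnn : ∀ i, 0 ≤ x' i := by
              intro i
              rcases eq_or_ne i v with rfl | hiv
              · rw [hx', Function.update_self]
                positivity
              · rw [hx', Function.update_of_ne hiv]
                rcases eq_or_ne i u with rfl | hiu
                · rw [Function.update_self]
                · rw [Function.update_of_ne hiu]
                  exact hx i
            have hsupp : (Finset.univ.filter fun i => x' i ≠ 0) ⊆ T.erase u := by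
              intro i hi
              rw [Finset.mem_filter] at hi
              rcases eq_or_ne i v with rfl | hiv
              · exact Finset.mem_erase.2 ⟨Ne.symm hne, hvT⟩
              · rcases eq_or_ne i u with rfl | hiu
                · rw [hx', Function.update_of_ne hiv, Function.update_self] at hi
                  exact absurd rfl hi.2
                · rw [hx', Function.update_of_ne hiv, Function.update_of_ne hiu] at hi
                  exact Finset.mem_erase.2 ⟨hiu, Finset.mem_filter.2 ⟨Finset.mem_univ i, hi.2⟩⟩
            apply hfin x' hnn (le_trans (Finset.card_le_card hsupp) (herase u huT))
            · rw [hx', hmove2, ← hE, ← hF]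
              have : (0 - x u) * E + (x v + t * E - x v) * F = 0 := by
                rw [ht]
                field_simp
                ring
              linarith [this]
            · rw [hx', hmoves, ← hBu, ← hBv]
              have : 0 ≤ (0 - x u) * Bu + (x v + t * E - x v) * Bv := by
                have h1 : (0 - x u) * Bu + (x v + t * E - x v) * Bv
                    = -((x u / F) * (F * Bu - E * Bv)) := by
                  rw [ht]
                  field_simp
                  ring
                rw [h1]
                have h2 : (x u / F) * (F * Bu - E * Bv) ≤ 0 :=
                  mul_nonpos_of_nonneg_of_nonpos (div_nonneg hxu.le hFpos.le) hg.le
                linarith [h2]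
              linarith [this]

end GraphMain

section Zykov
open SimpleGraph Finset
open scoped Classical

variable {n : ℕ}

lemma fESym_one {ι : Type*} [DecidableEq ι] (T : Finset ι) (x : ι → ℝ) :
    fESym T x 1 = ∑ i ∈ T, x i := by
  rw [fESym, Finset.powersetCard_one, Finset.sum_map]
  simp

lemma fESym_sq_identity {ι : Type*} [DecidableEq ι] (T : Finset ι) (x : ι → ℝ) :
    (∑ i ∈ T, x i)^2 = (∑ i ∈ T, x i ^ 2) + 2 * fESym T x 2 := by
  induction T using Finset.induction_on with
  | empty => simp [fESym_of_lt (show (∅ : Finset ι).card < 2 by simp)]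
  | @insert a T ha IH =>
    have hins := fESym_insert ha x 1
    norm_num at hins
    rw [Finset.sum_insert ha, Finset.sum_insert ha, hins, fESym_one]
    nlinarith [IH]

/-- Turán-type edge bound, weighted form. -/
lemma zykov_clique {ι : Type*} [DecidableEq ι] (T : Finset ι) (x : ι → ℝ) (r : ℕ)
    (hr : 2 ≤ r) (hTr : T.card ≤ r) (hx : ∀ i ∈ T, 0 ≤ x i) :
    2 * (r:ℝ) * fESym T x 2 ≤ ((r:ℝ) - 1) * (fESym T x 1)^2 := by
  rcases lt_or_ge T.card 2 with hm | hm
  · rw [fESym_of_lt hm]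
    have h1 : (0:ℝ) ≤ (fESym T x 1)^2 := sq_nonneg _
    have h2 : (1:ℝ) ≤ (r:ℝ) := by exact_mod_cast le_trans (by omega) hr
    nlinarith
  · have hCS : (∑ i ∈ T, x i)^2 ≤ (T.card : ℝ) * ∑ i ∈ T, x i ^ 2 := by
      exact_mod_cast sq_sum_le_card_mul_sum_sq (s := T) (f := x)
    have hid := fESym_sq_identity T x
    have hm1 : (2:ℝ) ≤ (T.card : ℝ) := by exact_mod_cast hm
    have hmr : (T.card : ℝ) ≤ (r:ℝ) := by exact_mod_cast hTr
    have he2 : 0 ≤ fESym T x 2 := fESym_nonneg hx 2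
    rw [fESym_one]
    -- 2 m e2 ≤ (m-1) e1^2 and monotonicity in m
    set m := (T.card : ℝ)
    set e1 := ∑ i ∈ T, x i
    set sq2 := ∑ i ∈ T, x i ^ 2
    have key : 2 * m * fESym T x 2 ≤ (m - 1) * e1^2 := by nlinarith
    have he1 : 0 ≤ e1^2 := sq_nonneg _
    nlinarith [mul_nonneg he2 (sub_nonneg.2 hmr)]

lemma zykov_graph (G : SimpleGraph (Fin n)) (r : ℕ) (hG : G.CliqueFree (r + 1))
    (hr : 2 ≤ r) :
    ∀ (k : ℕ) (x : Fin n → ℝ), (∀ i, 0 ≤ x i) →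
      (Finset.univ.filter fun i => x i ≠ 0).card ≤ k →
      2 * (r:ℝ) * gP G 2 x ≤ ((r:ℝ) - 1) * (gP G 1 x)^2 := by
  intro k
  induction k with
  | zero =>
    intro x hx hk
    have hTe : (Finset.univ.filter fun i => x i ≠ 0) = ∅ :=
      Finset.card_eq_zero.1 (Nat.le_zero.1 hk)
    have hcl : G.IsClique ((Finset.univ.filter fun i => x i ≠ 0) : Finset (Fin n)) := by
      rw [hTe]; simp [SimpleGraph.IsClique]
    rw [gP_eq_fESym G x 2 (by omega) hcl, gP_eq_fESym G x 1 (by omega) hcl]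
    apply zykov_clique _ x r hr ?_ (fun i hi => hx i)
    rw [hTe]
    simp
  | succ k IH =>
    intro x hx hk1
    by_cases hcl : G.IsClique ((Finset.univ.filter fun i => x i ≠ 0) : Finset (Fin n))
    · rw [gP_eq_fESym G x 2 (by omega) hcl, gP_eq_fESym G x 1 (by omega) hcl]
      apply zykov_clique _ x r hr ?_ (fun i hi => hx i)
      by_contra hgt
      push_neg at hgt
      obtain ⟨U, hUT, hU⟩ := Finset.exists_subset_card_eq
        (by omega : r + 1 ≤ (Finset.univ.filter fun i => x i ≠ 0).card)
      exact hG U ⟨hcl.subset (by exact_mod_cast Finset.coe_subset.2 hUT), hU⟩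
    · set T := Finset.univ.filter fun i => x i ≠ 0 with hT
      rw [SimpleGraph.isClique_iff] at hcl
      simp only [Set.Pairwise, not_forall] at hcl
      obtain ⟨u, hu, v, hv, hne, hnadj⟩ := hcl
      have huT : u ∈ T := Finset.mem_coe.1 hu
      have hvT : v ∈ T := Finset.mem_coe.1 hv
      have hxu : 0 < x u := lt_of_le_of_ne (hx u) (Ne.symm (Finset.mem_filter.1 huT).2)
      have hxv : 0 < x v := lt_of_le_of_ne (hx v) (Ne.symm (Finset.mem_filter.1 hvT).2)
      have hB1u : gB G 1 u x = 1 := gB_one G u x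
      have hB1v : gB G 1 v x = 1 := gB_one G v x
      set E := gB G 2 u x with hE
      set F := gB G 2 v x with hF
      have herase : ∀ w ∈ T, (T.erase w).card ≤ k := by
        intro w hw
        rw [Finset.card_erase_of_mem hw]
        have : 1 ≤ T.card := Finset.card_pos.2 ⟨w, hw⟩
        omega
      have main : ∀ a b : ℝ, 0 ≤ a → 0 ≤ b → a + b = x u + x v →
          gP G 2 x ≤ gP G 2 (Function.update (Function.update x u a) v b) →
          (Finset.univ.filter fun i =>
            (Function.update (Function.update x u a) v b) i ≠ 0).card ≤ k →
          2 * (r:ℝ) * gP G 2 x ≤ ((r:ℝ) - 1) * (gP G 1 x)^2 := by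
        intro a b ha hb hab h2le hcard
        have h1 : gP G 1 (Function.update (Function.update x u a) v b) = gP G 1 x := by
          rw [gP_move G 1 hne hnadj x a b, hB1u, hB1v]
          linarith [hab]
        have := IH (Function.update (Function.update x u a) v b)
          (fun i => by
            rcases eq_or_ne i v with rfl | hiv
            · rw [Function.update_self]; exact hb
            · rw [Function.update_of_ne hiv]
              rcases eq_or_ne i u with rfl | hiu
              · rw [Function.update_self]; exact ha
              · rw [Function.update_of_ne hiu]; exact hx i)
          hcard
        rw [h1] at this
        have hr1 : (0:ℝ) ≤ (r:ℝ) - 1 := by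
          have : (1:ℝ) ≤ (r:ℝ) := by exact_mod_cast le_trans (by omega) hr
          linarith
        calc 2 * (r:ℝ) * gP G 2 x
            ≤ 2 * (r:ℝ) * gP G 2 (Function.update (Function.update x u a) v b) := by
              have : (0:ℝ) ≤ 2 * (r:ℝ) := by positivity
              nlinarith
          _ ≤ ((r:ℝ) - 1) * (gP G 1 x)^2 := this
      rcases le_or_gt F E with hFE | hEF
      · -- move all of v onto u
        apply main (x u + x v) 0 (by positivity) le_rfl (by ring)
        · rw [gP_move G 2 hne hnadj x (x u + x v) 0, ← hE, ← hF]
          nlinarith [hxv, sub_nonneg.2 hFE]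
        · apply le_trans (Finset.card_le_card ?_) (herase v hvT)
          intro i hi
          rw [Finset.mem_filter] at hi
          rcases eq_or_ne i v with rfl | hiv
          · rw [Function.update_self] at hi
            exact absurd rfl hi.2
          · rcases eq_or_ne i u with rfl | hiu
            · exact Finset.mem_erase.2 ⟨hne, huT⟩
            · rw [Function.update_of_ne hiv, Function.update_of_ne hiu] at hi
              exact Finset.mem_erase.2 ⟨hiv, Finset.mem_filter.2 ⟨Finset.mem_univ i, hi.2⟩⟩
      · -- move all of u onto v
        apply main 0 (x u + x v) le_rfl (by positivity) (by ring)
        · rw [gP_move G 2 hne hnadj x 0 (x u + x v), ← hE, ← hF]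
          nlinarith [hxu, hEF]
        · apply le_trans (Finset.card_le_card ?_) (herase u huT)
          intro i hi
          rw [Finset.mem_filter] at hi
          rcases eq_or_ne i v with rfl | hiv
          · exact Finset.mem_erase.2 ⟨Ne.symm hne, hvT⟩
          · rcases eq_or_ne i u with rfl | hiu
            · rw [Function.update_of_ne hiv, Function.update_self] at hi
              exact absurd rfl hi.2
            · rw [Function.update_of_ne hiv, Function.update_of_ne hiu] at hi
              exact Finset.mem_erase.2 ⟨hiu, Finset.mem_filter.2 ⟨Finset.mem_univ i, hi.2⟩⟩

end Zykov

section Counting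
open SimpleGraph Finset
open scoped Classical

variable {n : ℕ}

lemma gP_one_vec (G : SimpleGraph (Fin n)) (j : ℕ) :
    gP G j (fun _ => (1:ℝ)) = ((G.cliqueFinset j).card : ℝ) := by
  rw [gP]
  simp

lemma fr_rpow_subadd {A B p : ℝ} (hA : 0 ≤ A) (hB : 0 ≤ B) (hp : 0 ≤ p) (hp1 : p ≤ 1) :
    (A + B) ^ p ≤ A ^ p + B ^ p := by
  have h := NNReal.rpow_add_le_add_rpow (Real.toNNReal A) (Real.toNNReal B) hp hp1
  rw [← Real.toNNReal_add hA hB] at h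
  have h2 := NNReal.coe_le_coe.2 h
  rw [NNReal.coe_add, NNReal.coe_rpow, NNReal.coe_rpow, NNReal.coe_rpow,
    Real.coe_toNNReal _ (add_nonneg hA hB), Real.coe_toNNReal _ hA,
    Real.coe_toNNReal _ hB] at h2
  exact h2

lemma card_cliqueFinset_two (G : SimpleGraph (Fin n)) :
    G.edgeFinset.card = (G.cliqueFinset 2).card := by
  apply Finset.card_bij
    (fun e _ => Sym2.lift ⟨fun a b => ({a, b} : Finset (Fin n)),
      fun a b => Finset.pair_comm a b⟩ e)
  · intro e he
    induction e using Sym2.ind with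
    | _ a b =>
      have hadj : G.Adj a b := (SimpleGraph.mem_edgeSet G).1 (SimpleGraph.mem_edgeFinset.1 he)
      simp only [Sym2.lift_mk]
      exact SimpleGraph.mem_cliqueFinset_iff.2 (fr_isNClique_pair G hadj)
  · intro e he f hf hef
    induction e using Sym2.ind with
    | _ a b =>
      induction f using Sym2.ind with
      | _ c d =>
        simp only [Sym2.lift_mk] at hef
        have hab : a ≠ b :=
          ((SimpleGraph.mem_edgeSet G).1 (SimpleGraph.mem_edgeFinset.1 he)).ne
        have ha : a = c ∨ a = d := by
          have : a ∈ ({c, d} : Finset (Fin n)) := hef ▸ Finset.mem_insert_self a {b}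
          simpa using this
        have hb : b = c ∨ b = d := by
          have : b ∈ ({c, d} : Finset (Fin n)) := hef ▸ (by simp)
          simpa using this
        rw [Sym2.eq_iff]
        rcases ha with rfl | rfl
        · rcases hb with rfl | rfl
          · exact absurd rfl hab
          · exact Or.inl ⟨rfl, rfl⟩
        · rcases hb with rfl | rfl
          · exact Or.inr ⟨rfl, rfl⟩
          · exact absurd rfl hab
  · intro S hS
    rw [SimpleGraph.mem_cliqueFinset_iff] at hS
    obtain ⟨a, b, hab, rfl⟩ := Finset.card_eq_two.1 hS.2
    have hadj : G.Adj a b := hS.1 (by simp) (by simp) hab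
    refine ⟨s(a, b), ?_, ?_⟩
    · exact SimpleGraph.mem_edgeFinset.2 ((SimpleGraph.mem_edgeSet G).2 hadj)
    · simp [Sym2.lift_mk]

lemma gP_edges {n : ℕ} (H : SimpleGraph (Fin n)) :
    gP H 2 (fun _ => (1:ℝ)) = (H.edgeSet.ncard : ℝ) := by
  rw [gP_one_vec, ← card_cliqueFinset_two, ← Set.ncard_coe_finset, SimpleGraph.coe_edgeFinset]

lemma gP_ones_le {n : ℕ} (H : SimpleGraph (Fin n)) :
    gP H 1 (fun _ => (1:ℝ)) ≤ (n:ℝ) := by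
  rw [gP_one_vec]
  have h0 := SimpleGraph.card_cliqueFinset_le (G := H) (n := 1)
  have h2 : (Fintype.card (Fin n)).choose 1 = n := by simp
  rw [h2] at h0
  exact_mod_cast h0

end Counting

end FRMachinery

/-- A `K_{r+1}`-free graph with many `s`-cliques has many edges. -/
theorem stmt_12 (r s n : ℕ) (hr : 2 ≤ r) (hs : 2 ≤ s) (hsr : s ≤ r) (δ : ℝ) (hδ : 0 ≤ δ)
    (G : SimpleGraph (Fin n)) (hG : G.CliqueFree (r + 1))
    (hks : (r.choose s : ℝ) * ((n : ℝ) / r) ^ s - δ * (n : ℝ) ^ s ≤ (cliqueCount G s : ℝ)) :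
    ((turanGraph n r).edgeSet.ncard : ℝ) -
        (r.choose 2 : ℝ) * (δ / (r.choose s : ℝ)) ^ ((2 : ℝ) / s) * (n : ℝ) ^ 2 ≤
      (G.edgeSet.ncard : ℝ) := by
  classical
  have hr0 : 0 < r := by omega
  have hsR : (0:ℝ) < (s:ℝ) := by exact_mod_cast (by omega : 0 < s)
  have hCs : (0:ℝ) < (r.choose s : ℝ) := by exact_mod_cast Nat.choose_pos hsr
  have hC2 : (0:ℝ) < (r.choose 2 : ℝ) := by exact_mod_cast Nat.choose_pos hr
  set p : ℝ := (2:ℝ)/(s:ℝ) with hp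
  have hp0 : 0 ≤ p := by positivity
  have hp1 : p ≤ 1 := by
    rw [hp, div_le_one hsR]
    exact_mod_cast hs
  set β : ℝ := δ / (r.choose s : ℝ) with hβ
  have hβ0 : 0 ≤ β := div_nonneg hδ hCs.le
  have hK : (cliqueCount G s : ℝ) = ((G.cliqueFinset s).card : ℝ) := by
    have hset : {S : Finset (Fin n) | G.IsNClique s S} = ↑(G.cliqueFinset s) := by
      ext S
      simp [SimpleGraph.mem_cliqueFinset_iff]
    rw [cliqueCount, hset, Set.ncard_coe_finset]
  have hsupp : ∀ x : Fin n → ℝ, (Finset.univ.filter fun i => x i ≠ 0).card ≤ n := fun x =>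
    le_trans (Finset.card_filter_le _ _) (by simp)
  have hfr : (r.choose 2:ℝ)^s * (cliqueCount G s : ℝ)^2
      ≤ (r.choose s:ℝ)^2 * (G.edgeSet.ncard:ℝ)^s := by
    have h := fr_graph G r s hG hs hsr n (fun _ => 1) (fun _ => zero_le_one) (hsupp _)
    rw [gP_edges, gP_one_vec] at h
    rw [hK]
    exact h
  have hT2 : 2*(r:ℝ)*((turanGraph n r).edgeSet.ncard:ℝ) ≤ ((r:ℝ)-1)*(n:ℝ)^2 := by
    have hfree := SimpleGraph.turanGraph_cliqueFree (n := n) hr0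
    have h := zykov_graph (turanGraph n r) r hfree hr n (fun _ => 1)
      (fun _ => zero_le_one) (hsupp _)
    rw [gP_edges] at h
    have h1 : gP (turanGraph n r) 1 (fun _ => (1:ℝ)) ≤ (n:ℝ) := gP_ones_le _
    have h1nn : 0 ≤ gP (turanGraph n r) 1 (fun _ => (1:ℝ)) :=
      gP_nonneg _ _ (fun _ => zero_le_one)
    have hr1 : (0:ℝ) ≤ (r:ℝ) - 1 := by
      have : (1:ℝ) ≤ (r:ℝ) := by exact_mod_cast (by omega : 1 ≤ r)
      linarith
    have hsq : (gP (turanGraph n r) 1 (fun _ => (1:ℝ)))^2 ≤ (n:ℝ)^2 :=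
      pow_le_pow_left₀ h1nn h1 2
    linarith [h, mul_le_mul_of_nonneg_left hsq hr1]
  have hch2 : (r.choose 2 : ℝ) * 2 = (r:ℝ)*((r:ℝ)-1) := by
    have heven : 2 ∣ r * (r-1) := by
      have h := Nat.even_mul_succ_self (r-1)
      rw [show r - 1 + 1 = r from by omega] at h
      rw [mul_comm]
      exact h.two_dvd
    have hnat : r.choose 2 * 2 = r * (r-1) := by
      rw [Nat.choose_two_right]
      exact Nat.div_mul_cancel heven
    calc (r.choose 2:ℝ)*2 = ((r.choose 2 * 2 : ℕ):ℝ) := by push_cast; ring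
      _ = ((r*(r-1) : ℕ):ℝ) := by rw [hnat]
      _ = (r:ℝ)*((r:ℝ)-1) := by
          rw [Nat.cast_mul, Nat.cast_sub (by omega : 1 ≤ r)]
          push_cast
          ring
  have hrR : (0:ℝ) < (r:ℝ) := by exact_mod_cast hr0
  have hTb : ((turanGraph n r).edgeSet.ncard:ℝ) ≤ (r.choose 2:ℝ) * ((n:ℝ)/(r:ℝ))^2 := by
    have hknow : (r.choose 2:ℝ) * ((n:ℝ)/(r:ℝ))^2 = ((r:ℝ)-1)*(n:ℝ)^2/(2*(r:ℝ)) := by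
      field_simp
      linear_combination ((n:ℝ)^2) * hch2
    rw [hknow, le_div_iff₀ (by positivity)]
    linarith [hT2]
  have hnr_nn : (0:ℝ) ≤ (n:ℝ)/(r:ℝ) := by positivity
  have hpow_id : ∀ X : ℝ, 0 ≤ X → (X^s) ^ p = X^2 := by
    intro X hX
    rw [← Real.rpow_natCast_mul hX s p, show (s:ℝ)*p = 2 from by rw [hp]; field_simp,
      show (2:ℝ) = ((2:ℕ):ℝ) from by norm_num, Real.rpow_natCast]
  rcases le_or_gt (((n:ℝ)/(r:ℝ))^s) (β * (n:ℝ)^s) with hcase | hcase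
  · have h1 : ((n:ℝ)/(r:ℝ))^2 ≤ β^p * (n:ℝ)^2 := by
      have h2 : (((n:ℝ)/(r:ℝ))^s)^p ≤ (β*(n:ℝ)^s)^p :=
        Real.rpow_le_rpow (by positivity) hcase hp0
      rw [hpow_id _ hnr_nn, Real.mul_rpow hβ0 (by positivity), hpow_id _ (by positivity)] at h2
      exact h2
    have hG0 : (0:ℝ) ≤ (G.edgeSet.ncard:ℝ) := by positivity
    have hlast : ((turanGraph n r).edgeSet.ncard:ℝ) ≤ (r.choose 2:ℝ)*β^p*(n:ℝ)^2 := by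
      calc ((turanGraph n r).edgeSet.ncard:ℝ) ≤ (r.choose 2:ℝ)*((n:ℝ)/(r:ℝ))^2 := hTb
        _ ≤ (r.choose 2:ℝ)*(β^p*(n:ℝ)^2) := mul_le_mul_of_nonneg_left h1 hC2.le
        _ = (r.choose 2:ℝ)*β^p*(n:ℝ)^2 := by ring
    linarith [hlast, hG0]
  · set W : ℝ := ((n:ℝ)/(r:ℝ))^s - β*(n:ℝ)^s with hW
    have hWpos : 0 < W := by rw [hW]; linarith [hcase]
    have hδβ : δ = (r.choose s:ℝ) * β := by rw [hβ]; field_simp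
    have hKW : (r.choose s:ℝ) * W ≤ (cliqueCount G s : ℝ) := by
      rw [hW]
      calc (r.choose s:ℝ)*(((n:ℝ)/(r:ℝ))^s - β*(n:ℝ)^s)
          = (r.choose s:ℝ)*((n:ℝ)/(r:ℝ))^s - δ*(n:ℝ)^s := by rw [hδβ]; ring
        _ ≤ _ := hks
    have heGs : (r.choose 2:ℝ)^s * W^2 ≤ (G.edgeSet.ncard:ℝ)^s := by
      have hK2 : ((r.choose s:ℝ)*W)^2 ≤ (cliqueCount G s:ℝ)^2 :=
        pow_le_pow_left₀ (by positivity) hKW 2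
      have hstep : (r.choose 2:ℝ)^s * (((r.choose s:ℝ))^2 * W^2)
          ≤ (r.choose s:ℝ)^2 * (G.edgeSet.ncard:ℝ)^s := by
        calc (r.choose 2:ℝ)^s * (((r.choose s:ℝ))^2 * W^2)
            = (r.choose 2:ℝ)^s * ((r.choose s:ℝ)*W)^2 := by ring
          _ ≤ (r.choose 2:ℝ)^s * (cliqueCount G s:ℝ)^2 :=
              mul_le_mul_of_nonneg_left hK2 (by positivity)
          _ ≤ _ := hfr
      have hCs2 : (0:ℝ) < (r.choose s:ℝ)^2 := by positivity
      apply le_of_mul_le_mul_left _ hCs2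
      calc (r.choose s:ℝ)^2 * ((r.choose 2:ℝ)^s * W^2)
          = (r.choose 2:ℝ)^s * (((r.choose s:ℝ))^2 * W^2) := by ring
        _ ≤ (r.choose s:ℝ)^2 * (G.edgeSet.ncard:ℝ)^s := hstep
    have hWp_pow : (W^p)^s = W^2 := by
      rw [← Real.rpow_natCast (W^p) s, ← Real.rpow_mul hWpos.le,
        show p*(s:ℝ) = 2 from by rw [hp]; field_simp,
        show (2:ℝ) = ((2:ℕ):ℝ) from by norm_num, Real.rpow_natCast]
    have heG : (r.choose 2:ℝ) * W^p ≤ (G.edgeSet.ncard:ℝ) := by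
      apply le_of_pow_le_pow_left₀ (show s ≠ 0 by omega) (by positivity)
      calc ((r.choose 2:ℝ)*W^p)^s = (r.choose 2:ℝ)^s * (W^p)^s := mul_pow _ _ s
        _ = (r.choose 2:ℝ)^s * W^2 := by rw [hWp_pow]
        _ ≤ _ := heGs
    have hsub : ((n:ℝ)/(r:ℝ))^2 - β^p*(n:ℝ)^2 ≤ W^p := by
      have h := fr_rpow_subadd (A := W) (B := β*(n:ℝ)^s) hWpos.le (by positivity) hp0 hp1
      rw [show W + β*(n:ℝ)^s = ((n:ℝ)/(r:ℝ))^s from by rw [hW]; ring] at h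
      rw [hpow_id _ hnr_nn, Real.mul_rpow hβ0 (by positivity), hpow_id _ (by positivity)] at h
      linarith [h]
    calc ((turanGraph n r).edgeSet.ncard:ℝ) - (r.choose 2:ℝ)*β^p*(n:ℝ)^2
        ≤ (r.choose 2:ℝ)*((n:ℝ)/(r:ℝ))^2 - (r.choose 2:ℝ)*β^p*(n:ℝ)^2 := by linarith [hTb]
      _ = (r.choose 2:ℝ)*(((n:ℝ)/(r:ℝ))^2 - β^p*(n:ℝ)^2) := by ring
      _ ≤ (r.choose 2:ℝ)*W^p := mul_le_mul_of_nonneg_left hsub hC2.le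
      _ ≤ _ := heG
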